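/- Let Θ be a nonempty type, V₀ : Θ → ℝ, V : Θ → ℝ^m, c ∈ ℝ^m, L(θ, λ) = V₀(θ) + ∑_{i=1}^m λᵢ (Vᵢ(θ) − cᵢ), and d(λ) = sup_{θ ∈ Θ} L(θ, λ), assumed finite for all λ ≥ 0. Let δ ≥ 0 and θ† : ℝ^m → Θ satisfy d(λ) ≤ L(θ†(λ), λ) + δ for every λ ≥ 0, and suppose ‖V(θ†(λ)) − c‖² ≤ B for every λ ≥ 0. Let η > 0 and let [x]₊ denote the coordinatewise positive part (([x]₊)ᵢ = max(xᵢ, 0)). Then for every λ ≥ 0 and every λ* ≥ 0, the projected dual step λ' = [λ − η (V(θ†(λ)) − c)]₊ satisfies ‖λ' − λ*‖² ≤ ‖λ − λ*‖² + 2η ( δ + d(λ*) − d(λ) ) + η² B, where ‖·‖ is the Euclidean norm on ℝ^m. -/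

import Mathlib

open RealInnerProductSpace


/-- **One-step descent inequality for the projected approximate dual gradient
step** (proof of Theorem 3). A projected step
`λ' = [λ − η (V(θ†(λ)) − c)]₊` using the `δ`-approximate supergradient
`V(θ†(λ)) − c` of the dual function `d` satisfies
`‖λ' − λ*‖² ≤ ‖λ − λ*‖² + 2η(δ + d(λ*) − d(λ)) + η² B`. -/
theorem dual_descent_step_inequality
    {Θ : Type*} [Nonempty Θ] {m : ℕ}
    (V₀ : Θ → ℝ) (V : Θ → Fin m → ℝ) (c : Fin m → ℝ)
    (hbdd : ∀ l : EuclideanSpace ℝ (Fin m), (∀ i, 0 ≤ l i) →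
      BddAbove (Set.range fun θ => V₀ θ + ∑ i, l i * (V θ i - c i)))
    (δ : ℝ) (hδ : 0 ≤ δ)
    (θd : EuclideanSpace ℝ (Fin m) → Θ)
    (happrox : ∀ l : EuclideanSpace ℝ (Fin m), (∀ i, 0 ≤ l i) →
      sSup (Set.range fun θ => V₀ θ + ∑ i, l i * (V θ i - c i)) ≤
        (V₀ (θd l) + ∑ i, l i * (V (θd l) i - c i)) + δ)
    (B : ℝ)
    (hB : ∀ l : EuclideanSpace ℝ (Fin m), (∀ i, 0 ≤ l i) →
      ‖(show EuclideanSpace ℝ (Fin m) from WithLp.toLp 2 (fun i => V (θd l) i - c i))‖ ^ 2 ≤ B)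
    (η : ℝ) (hη : 0 < η)
    (l lstar : EuclideanSpace ℝ (Fin m))
    (hl : ∀ i, 0 ≤ l i) (hlstar : ∀ i, 0 ≤ lstar i) :
    ‖(show EuclideanSpace ℝ (Fin m) from
          WithLp.toLp 2 (fun i => max (l i - η * (V (θd l) i - c i)) 0)) - lstar‖ ^ 2 ≤
      ‖l - lstar‖ ^ 2 +
        2 * η * (δ +
          sSup (Set.range fun θ => V₀ θ + ∑ i, lstar i * (V θ i - c i)) -
          sSup (Set.range fun θ => V₀ θ + ∑ i, l i * (V θ i - c i))) +
        η ^ 2 * B := by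
  set g : EuclideanSpace ℝ (Fin m) := WithLp.toLp 2 (fun i => V (θd l) i - c i) with hg
  set lp : EuclideanSpace ℝ (Fin m) :=
    WithLp.toLp 2 (fun i => max (l i - η * (V (θd l) i - c i)) 0) with hlp
  set dl := sSup (Set.range fun θ => V₀ θ + ∑ i, l i * (V θ i - c i)) with hdl
  set dls := sSup (Set.range fun θ => V₀ θ + ∑ i, lstar i * (V θ i - c i)) with hdls
  -- Step 1: projection is nonexpansive coordinatewise
  have step1 : ‖lp - lstar‖ ^ 2 ≤ ‖(l - η • g) - lstar‖ ^ 2 := by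
    rw [EuclideanSpace.norm_eq, EuclideanSpace.norm_eq,
      Real.sq_sqrt (by positivity), Real.sq_sqrt (by positivity)]
    apply Finset.sum_le_sum
    intro i _
    have h1 : (lp - lstar) i = max (l i - η * (V (θd l) i - c i)) 0 - lstar i := rfl
    have h2 : ((l - η • g) - lstar) i = (l i - η * (V (θd l) i - c i)) - lstar i := rfl
    rw [h1, h2]
    simp only [Real.norm_eq_abs, sq_abs]
    have hbi := hlstar i
    rcases le_or_gt 0 (l i - η * (V (θd l) i - c i)) with h | h
    · rw [max_eq_left h]
    · rw [max_eq_right h.le]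
      nlinarith
  -- Step 2: inner product bound
  have hinner : (dl - δ) - dls ≤ ⟪l - lstar, g⟫ := by
    have h1 : dl ≤ (V₀ (θd l) + ∑ i, l i * (V (θd l) i - c i)) + δ := happrox l hl
    have h2 : V₀ (θd l) + ∑ i, lstar i * (V (θd l) i - c i) ≤ dls :=
      le_csSup (hbdd lstar hlstar) ⟨θd l, rfl⟩
    have h3 : ⟪l - lstar, g⟫ =
        ∑ i, (l i - lstar i) * (V (θd l) i - c i) := by
      rw [PiLp.inner_apply]
      exact Finset.sum_congr rfl fun i _ => by simp [g, mul_comm]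
    have h4 : ∑ i, (l i - lstar i) * (V (θd l) i - c i)
        = (∑ i, l i * (V (θd l) i - c i)) - ∑ i, lstar i * (V (θd l) i - c i) := by
      rw [← Finset.sum_sub_distrib]
      exact Finset.sum_congr rfl fun i _ => by ring
    rw [h3, h4]; linarith
  -- Step 3: expand the square
  have hexp : ‖(l - η • g) - lstar‖ ^ 2 =
      ‖l - lstar‖ ^ 2 - 2 * (η * ⟪l - lstar, g⟫) + η ^ 2 * ‖g‖ ^ 2 := by
    have : (l - η • g) - lstar = (l - lstar) - η • g := by abel
    rw [this, norm_sub_sq_real, real_inner_smul_right, norm_smul,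
      Real.norm_eq_abs, mul_pow, sq_abs]
  have hgB : ‖g‖ ^ 2 ≤ B := hB l hl
  calc ‖lp - lstar‖ ^ 2 ≤ ‖(l - η • g) - lstar‖ ^ 2 := step1
    _ = ‖l - lstar‖ ^ 2 - 2 * (η * ⟪l - lstar, g⟫) + η ^ 2 * ‖g‖ ^ 2 := hexp
    _ ≤ ‖l - lstar‖ ^ 2 + 2 * η * (δ + dls - dl) + η ^ 2 * B := by
        nlinarith [mul_le_mul_of_nonneg_left hinner hη.le, sq_nonneg η]
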